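/- arXiv:1610.04137 — 5 statements merged into one kernel-verified Lean document; each statement's English description precedes it below -/
import Mathlib

section
/- Let R be a quasi-Frobenius ring and let f : M → N be a surjective R-linear map between R-modules that is a stable equivalence. Then the kernel of f is a projective R-module and f is a split projection: there exists an R-module isomorphism φ : M ≅ N × ker(f) such that f equals the canonical projection N × ker(f) → N composed with φ. -/
/-- An `R`-linear map factors through a projective `R`-module. -/
def FactorsThroughProjective (R : Type) [Ring R] {M N : Type} [AddCommGroup M] [Module R M]
    [AddCommGroup N] [Module R N] (f : M →ₗ[R] N) : Prop :=
  ∃ (P : Type) (_ : AddCommGroup P) (_ : Module R P) (_ : Module.Projective R P)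
    (a : M →ₗ[R] P) (b : P →ₗ[R] N), b ∘ₗ a = f

/-- An `R`-linear map is a stable equivalence if it becomes an isomorphism in the stable
module category: there is `g` in the other direction such that `g ∘ f - id` and `f ∘ g - id`
each factor through a projective module. -/
def IsStableEquiv (R : Type) [Ring R] {M N : Type} [AddCommGroup M] [Module R M]
    [AddCommGroup N] [Module R N] (f : M →ₗ[R] N) : Prop :=
  ∃ g : N →ₗ[R] M,
    FactorsThroughProjective R (g ∘ₗ f - LinearMap.id) ∧
    FactorsThroughProjective R (f ∘ₗ g - LinearMap.id)

/-- A quasi-Frobenius ring: left and right Noetherian, and injective over itself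
as a left and as a right module. -/
class IsQuasiFrobenius (R : Type) [Ring R] : Prop where
  noetherian_left : IsNoetherianRing R
  noetherian_right : IsNoetherianRing Rᵐᵒᵖ
  selfInjective_left : Module.Injective R R
  selfInjective_right : Module.Injective Rᵐᵒᵖ Rᵐᵒᵖ

/-- Over a quasi-Frobenius ring, a surjective stable equivalence has projective kernel and is,
up to isomorphism, the projection from a direct product onto a factor. -/
theorem surjective_stableEquiv_split (R : Type) [Ring R] [IsQuasiFrobenius R]
    {M N : Type} [AddCommGroup M] [Module R M] [AddCommGroup N] [Module R N]
    (f : M →ₗ[R] N) (hsurj : Function.Surjective f) (hse : IsStableEquiv R f) :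
    Module.Projective R (LinearMap.ker f) ∧
    ∃ φ : M ≃ₗ[R] N × (LinearMap.ker f),
      (LinearMap.fst R N (LinearMap.ker f)) ∘ₗ (φ : M →ₗ[R] N × (LinearMap.ker f)) = f := by
  obtain ⟨g, ⟨P, _instP1, _instP2, hP, a, b, hab⟩, ⟨Q, _instQ1, _instQ2, hQ, c, d, hcd⟩⟩ := hse
  -- lift `d` through the surjection `f`
  obtain ⟨d', hd'⟩ := Module.projective_lifting_property f d hsurj
  -- section of f
  set s : N →ₗ[R] M := g - d' ∘ₗ c with hs
  have hfs : ∀ n : N, f (s n) = n := by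
    intro n
    have h1 : d (c n) = f (g n) - n := by
      have := congrArg (fun h => h n) hcd
      simpa using this
    have h2 : f (d' (c n)) = d (c n) := by
      have := congrArg (fun h => h (c n)) hd'
      simpa using this
    simp [hs, h2, h1]
  have hba : ∀ x : M, b (a x) = g (f x) - x := by
    intro x
    have := congrArg (fun h => h x) hab
    simpa using this
  -- retraction onto the kernel
  have hmem : ∀ x : M, x - s (f x) ∈ LinearMap.ker f := by
    intro x
    simp [LinearMap.mem_ker, hfs]
  set r : M →ₗ[R] LinearMap.ker f :=
    { toFun := fun x => ⟨x - s (f x), hmem x⟩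
      map_add' := fun x y => by ext; simp; abel
      map_smul' := fun t x => by ext; simp [smul_sub] } with hr
  have hrk : ∀ k : LinearMap.ker f, r (k : M) = k := by
    intro k
    ext
    have hk : f (k : M) = 0 := k.2
    simp [hr, hk]
  -- kernel is a retract of P, hence projective
  have hproj : Module.Projective R (LinearMap.ker f) := by
    refine Module.Projective.of_split (a ∘ₗ (LinearMap.ker f).subtype) (-(r ∘ₗ b)) ?_
    ext k
    have hk : f (k : M) = 0 := k.2
    have : b (a (k : M)) = -(k : M) := by simp [hba, hk]
    simp only [LinearMap.comp_apply, LinearMap.neg_apply, Submodule.subtype_apply, this,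
      LinearMap.id_coe, id_eq]
    rw [map_neg, neg_neg, hrk]
  refine ⟨hproj, ?_⟩
  -- the splitting isomorphism
  refine ⟨LinearEquiv.ofLinear (LinearMap.prod f r)
      ((s ∘ₗ LinearMap.fst R N (LinearMap.ker f)) +
        ((LinearMap.ker f).subtype ∘ₗ LinearMap.snd R N (LinearMap.ker f))) ?_ ?_, ?_⟩
  · apply LinearMap.ext
    rintro ⟨n, k⟩
    have hk : f (k : M) = 0 := k.2
    refine Prod.ext ?_ ?_
    · simp [hfs, hk]
    · refine Subtype.ext ?_
      simp [hr, hfs, hk]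
  · ext x
    simp [hr]
  · ext x
    simp
end

section
/- Let R be a quasi-Frobenius ring and let f : M → N be an injective R-linear map between R-modules that is a stable equivalence. Then the cokernel of f is an injective (equivalently projective) R-module and f is a split inclusion: there exists an R-module isomorphism ψ : M × coker(f) ≅ N such that f equals ψ composed with the canonical inclusion M → M × coker(f). -/
theorem Module.Injective.of_retract' {R : Type} [Ring R] {P Q : Type} [AddCommGroup P] [Module R P]
    [AddCommGroup Q] [Module R Q] (hQ : Module.Injective R Q)
    (i : P →ₗ[R] Q) (r : Q →ₗ[R] P) (hri : r ∘ₗ i = LinearMap.id) :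
    Module.Injective R P where
  out X Y _ _ _ _ u hu v := by
    obtain ⟨h, hh⟩ := hQ.out u hu (i ∘ₗ v)
    refine ⟨r ∘ₗ h, fun x => ?_⟩
    have h2 : r (i (v x)) = v x := LinearMap.congr_fun hri (v x)
    simp only [LinearMap.comp_apply] at hh ⊢
    rw [hh x, h2]

theorem injective_finsupp_of_noetherian (R : Type) [Ring R] [IsNoetherianRing R]
    (hR : Module.Injective R R) (ι : Type) : Module.Injective R (ι →₀ R) := by
  classical
  have hBaerR : Module.Baer R R := Module.Baer.of_injective hR
  apply Module.Baer.injective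
  intro I g
  obtain ⟨s, hs⟩ := (IsNoetherian.noetherian I : I.FG)
  let T : Finset ι := s.attach.sup fun x => (g ⟨x.1, hs ▸ Submodule.subset_span x.2⟩).support
  have hsupp : ∀ y (hy : y ∈ Submodule.span R (s : Set R)),
      ∀ j, (g ⟨y, hs ▸ hy⟩) j ≠ 0 → j ∈ T := by
    intro y hy
    induction hy using Submodule.span_induction with
    | mem y hy =>
      intro j hj
      exact Finset.le_sup (f := fun x : {x // x ∈ s} => (g ⟨x.1, hs ▸ Submodule.subset_span x.2⟩).support)
        (Finset.mem_attach s ⟨y, hy⟩) (Finsupp.mem_support_iff.mpr hj)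
    | zero =>
      intro j hj
      exact absurd (show (g 0) j = 0 by rw [map_zero]; rfl) hj
    | add x y hx hy ihx ihy =>
      intro j hj
      have : (⟨x + y, hs ▸ Submodule.add_mem _ hx hy⟩ : I) = ⟨x, hs ▸ hx⟩ + ⟨y, hs ▸ hy⟩ := rfl
      rw [this, map_add, Finsupp.add_apply] at hj
      by_cases h1 : (g ⟨x, hs ▸ hx⟩) j ≠ 0
      · exact ihx j h1
      · push_neg at h1
        exact ihy j (by intro h2; rw [h1, h2, add_zero] at hj; exact hj rfl)
    | smul r x hx ihx =>
      intro j hj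
      have : (⟨r • x, hs ▸ Submodule.smul_mem _ r hx⟩ : I) = r • ⟨x, hs ▸ hx⟩ := rfl
      rw [this, map_smul, Finsupp.smul_apply] at hj
      exact ihx j (by intro h2; rw [h2, smul_zero] at hj; exact hj rfl)
  choose h hh using fun j => hBaerR I (Finsupp.lapply j ∘ₗ g)
  refine ⟨∑ j ∈ T, Finsupp.lsingle j ∘ₗ h j, fun x hx => ?_⟩
  have hx' : x ∈ Submodule.span R (s : Set R) := hs.symm ▸ hx
  have hG : (∑ j ∈ T, Finsupp.lsingle (M := R) (R := R) j ∘ₗ h j) x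
      = ∑ j ∈ T, Finsupp.single j ((g ⟨x, hx⟩) j) := by
    rw [LinearMap.sum_apply]
    refine Finset.sum_congr rfl fun j _ => ?_
    rw [LinearMap.comp_apply, Finsupp.lsingle_apply, hh j x hx]
    rfl
  rw [hG]
  conv_rhs => rw [← Finsupp.sum_single (g ⟨x, hx⟩), Finsupp.sum]
  refine (Finset.sum_subset (fun j hj => hsupp x hx' j (Finsupp.mem_support_iff.mp hj))
    fun j _ hj => ?_).symm
  rw [Finsupp.notMem_support_iff.mp hj, Finsupp.single_zero]

theorem Module.Injective.of_projective_qf (R : Type) [Ring R] [IsQuasiFrobenius R]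
    (P : Type) [AddCommGroup P] [Module R P] (hP : Module.Projective R P) :
    Module.Injective R P := by
  haveI : IsNoetherianRing R := IsQuasiFrobenius.noetherian_left
  have hfree := injective_finsupp_of_noetherian R IsQuasiFrobenius.selfInjective_left P
  obtain ⟨sec, hsec⟩ := hP.out
  exact hfree.of_retract' sec (Finsupp.linearCombination R id) (LinearMap.ext hsec)

/-- Over a quasi-Frobenius ring, an injective stable equivalence has injective cokernel and is,
up to isomorphism, the inclusion of a factor into a direct product. -/
theorem injective_stableEquiv_split (R : Type) [Ring R] [IsQuasiFrobenius R]
    {M N : Type} [AddCommGroup M] [Module R M] [AddCommGroup N] [Module R N]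
    (f : M →ₗ[R] N) (hinj : Function.Injective f) (hse : IsStableEquiv R f) :
    Module.Injective R (N ⧸ LinearMap.range f) ∧
    ∃ ψ : (M × (N ⧸ LinearMap.range f)) ≃ₗ[R] N,
      (ψ : M × (N ⧸ LinearMap.range f) →ₗ[R] N) ∘ₗ
        (LinearMap.inl R M (N ⧸ LinearMap.range f)) = f := by
  obtain ⟨g, ⟨P, _, _, hP, a, b, hba⟩, ⟨Q, _, _, hQ, c, d, hdc⟩⟩ := hse
  have hPinj : Module.Injective R P := Module.Injective.of_projective_qf R P hP
  have hQinj : Module.Injective R Q := Module.Injective.of_projective_qf R Q hQ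
  obtain ⟨a', ha'⟩ := hPinj.out f hinj a
  set g' : N →ₗ[R] M := g - b ∘ₗ a' with hg'def
  have key : ∀ m, g' (f m) = m := by
    intro m
    have h1 := LinearMap.congr_fun hba m
    simp only [LinearMap.comp_apply, LinearMap.sub_apply, LinearMap.id_apply] at h1
    simp only [hg'def, LinearMap.sub_apply, LinearMap.comp_apply, ha' m, h1]
    abel
  set π : N →ₗ[R] N ⧸ LinearMap.range f := (LinearMap.range f).mkQ with hπdef
  have hle : LinearMap.range f ≤ LinearMap.ker (LinearMap.id - f ∘ₗ g') := by
    rintro _ ⟨m, rfl⟩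
    simp [key]
  set s : (N ⧸ LinearMap.range f) →ₗ[R] N := (LinearMap.range f).liftQ _ hle with hsdef
  have hs : ∀ n : N, s (π n) = n - f (g' n) := fun n => by
    simp [hsdef, hπdef]
  have hπf : ∀ m, π (f m) = 0 := fun m => by
    simp [hπdef, Submodule.Quotient.mk_eq_zero]
  have hπs : ∀ q, π (s q) = q := by
    intro q
    obtain ⟨n, rfl⟩ := (LinearMap.range f).mkQ_surjective q
    rw [show (LinearMap.range f).mkQ n = π n from rfl, hs, map_sub, hπf, sub_zero]
  have hg's : ∀ q, g' (s q) = 0 := by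
    intro q
    obtain ⟨n, rfl⟩ := (LinearMap.range f).mkQ_surjective q
    rw [show (LinearMap.range f).mkQ n = π n from rfl, hs, map_sub, key, sub_self]
  refine ⟨?_, ?_⟩
  · -- cokernel is a retract of Q
    have h2 : ∀ n : N, d (c n) = f (g n) - n := by
      intro n
      have := LinearMap.congr_fun hdc n
      simpa using this
    refine hQinj.of_retract' (c ∘ₗ s) (-(π ∘ₗ d)) ?_
    ext q
    simp only [LinearMap.comp_apply, LinearMap.neg_apply, LinearMap.id_apply]
    rw [h2, map_sub, hπf, hπs, zero_sub, neg_neg]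
  · refine ⟨LinearEquiv.ofLinear (LinearMap.coprod f s) (LinearMap.prod g' π) ?_ ?_,
      LinearMap.coprod_inl f s⟩
    · ext n
      simp only [LinearMap.comp_apply, LinearMap.prod_apply, Function.prod, LinearMap.coprod_apply,
        LinearMap.id_apply, hs]
      abel
    · ext x
      all_goals
        simp only [LinearMap.comp_apply, LinearMap.inl_apply, LinearMap.inr_apply,
          LinearMap.coprod_apply, LinearMap.prod_apply, Function.prod, LinearMap.id_apply,
          map_zero, map_add, add_zero, zero_add, key, hg's, hπf, hπs]
end

section
/- Let R be a quasi-Frobenius ring and let f : M → N be an R-linear map that is a stable equivalence. Then there exist projective R-modules P and Q and an R-module isomorphism φ : M × P ≅ N × Q such that f equals the composition of the canonical inclusion M → M × P, followed by φ, followed by the canonical projection N × Q → N. -/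
section helpers

variable {R : Type} [Ring R] {M N K : Type} [AddCommGroup M] [Module R M]
  [AddCommGroup N] [Module R N] [AddCommGroup K] [Module R K]

lemma ftp_comp_left (h : N →ₗ[R] K) {f : M →ₗ[R] N} (hf : FactorsThroughProjective R f) :
    FactorsThroughProjective R (h ∘ₗ f) := by
  obtain ⟨P, i1, i2, i3, a, b, hab⟩ := hf
  exact ⟨P, i1, i2, i3, a, h ∘ₗ b, by rw [LinearMap.comp_assoc, hab]⟩

lemma ftp_comp_right (h : K →ₗ[R] M) {f : M →ₗ[R] N} (hf : FactorsThroughProjective R f) :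
    FactorsThroughProjective R (f ∘ₗ h) := by
  obtain ⟨P, i1, i2, i3, a, b, hab⟩ := hf
  exact ⟨P, i1, i2, i3, a ∘ₗ h, b, by rw [← LinearMap.comp_assoc, hab]⟩

lemma ftp_add {f g : M →ₗ[R] N} (hf : FactorsThroughProjective R f)
    (hg : FactorsThroughProjective R g) : FactorsThroughProjective R (f + g) := by
  obtain ⟨P, i1, i2, i3, a, b, hab⟩ := hf
  obtain ⟨P', j1, j2, j3, a', b', hab'⟩ := hg
  refine ⟨P × P', inferInstance, inferInstance, inferInstance,
    LinearMap.prod a a', LinearMap.coprod b b', ?_⟩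
  ext m
  simp [hab, hab', ← LinearMap.comp_apply]

lemma ftp_of_projective_target [Module.Projective R N] (f : M →ₗ[R] N) :
    FactorsThroughProjective R f :=
  ⟨N, inferInstance, inferInstance, inferInstance, f, LinearMap.id, rfl⟩

end helpers

/-- Over a quasi-Frobenius ring, every stable equivalence `f : M → N` is, up to adding projective
direct summands, an isomorphism: `f` factors as the inclusion `M → M × P`, followed by an
isomorphism `M × P ≅ N × Q`, followed by the projection `N × Q → N`, with `P`, `Q` projective. -/
theorem stableEquiv_iso_up_to_projectives (R : Type) [Ring R] [IsQuasiFrobenius R]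
    {M N : Type} [AddCommGroup M] [Module R M] [AddCommGroup N] [Module R N]
    (f : M →ₗ[R] N) (hse : IsStableEquiv R f) :
    ∃ (P Q : Type) (_ : AddCommGroup P) (_ : Module R P) (_ : AddCommGroup Q) (_ : Module R Q)
      (_ : Module.Projective R P) (_ : Module.Projective R Q)
      (φ : (M × P) ≃ₗ[R] (N × Q)),
      (LinearMap.fst R N Q) ∘ₗ (φ : M × P →ₗ[R] N × Q) ∘ₗ (LinearMap.inl R M P) = f := by
  obtain ⟨g, ⟨P₀, i1, i2, i3, a, b, hab⟩, ⟨P₁, j1, j2, j3, c, d, hcd⟩⟩ := hse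
  have hab' : ∀ m : M, b (a m) = g (f m) - m := fun m => by
    have := congrFun (congrArg DFunLike.coe hab) m; simpa using this
  have hcd' : ∀ n : N, d (c n) = f (g n) - n := fun n => by
    have := congrFun (congrArg DFunLike.coe hcd) n; simpa using this
  set F : M →ₗ[R] N × P₀ := LinearMap.prod f a with hF
  set r : N × P₀ →ₗ[R] M := g ∘ₗ LinearMap.fst R N P₀ - b ∘ₗ LinearMap.snd R N P₀ with hr
  have hrapp : ∀ x : N × P₀, r x = g x.1 - b x.2 := fun x => by
    simp [hr]
  have hFapp : ∀ m : M, F m = (f m, a m) := fun m => by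
    simp [hF]
  have hrF : ∀ m : M, r (F m) = m := fun m => by
    rw [hFapp, hrapp]
    simp only []
    rw [hab' m]
    abel
  set C := LinearMap.ker r with hC
  have mem_ker : ∀ x : N × P₀, x - F (r x) ∈ C := fun x => by
    rw [hC, LinearMap.mem_ker, map_sub, hrF, sub_self]
  set ι : C →ₗ[R] N × P₀ := C.subtype with hι
  set π : N × P₀ →ₗ[R] C :=
    LinearMap.codRestrict C (LinearMap.id - F ∘ₗ r) mem_ker with hπ
  have hπcoe : ∀ x : N × P₀, (π x : N × P₀) = x - F (r x) := fun x => by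
    rw [hπ, LinearMap.codRestrict_apply]
    simp
  -- `id - F ∘ r` factors through a projective module
  have hT : FactorsThroughProjective R (LinearMap.id - F ∘ₗ r : N × P₀ →ₗ[R] N × P₀) := by
    have h1 : FactorsThroughProjective R
        (-(LinearMap.inl R N P₀ ∘ₗ d ∘ₗ c ∘ₗ LinearMap.fst R N P₀)) :=
      ⟨P₁, j1, j2, j3, c ∘ₗ LinearMap.fst R N P₀, -(LinearMap.inl R N P₀ ∘ₗ d), by
        apply LinearMap.ext; intro x
        simp⟩
    have h2 : FactorsThroughProjective R
        (LinearMap.inl R N P₀ ∘ₗ f ∘ₗ b ∘ₗ LinearMap.snd R N P₀) :=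
      ⟨P₀, i1, i2, i3, LinearMap.snd R N P₀, LinearMap.inl R N P₀ ∘ₗ f ∘ₗ b, by
        apply LinearMap.ext; intro x
        simp⟩
    have h3 : FactorsThroughProjective R
        (LinearMap.inr R N P₀ ∘ₗ (LinearMap.snd R N P₀ - a ∘ₗ r)) :=
      ⟨P₀, i1, i2, i3, LinearMap.snd R N P₀ - a ∘ₗ r, LinearMap.inr R N P₀, rfl⟩
    have heq : (LinearMap.id - F ∘ₗ r : N × P₀ →ₗ[R] N × P₀) =
        -(LinearMap.inl R N P₀ ∘ₗ d ∘ₗ c ∘ₗ LinearMap.fst R N P₀) +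
        LinearMap.inl R N P₀ ∘ₗ f ∘ₗ b ∘ₗ LinearMap.snd R N P₀ +
        LinearMap.inr R N P₀ ∘ₗ (LinearMap.snd R N P₀ - a ∘ₗ r) := by
      apply LinearMap.ext
      rintro ⟨n, p⟩
      have h4 : r (n, p) = g n - b p := hrapp (n, p)
      simp only [LinearMap.sub_apply, LinearMap.add_apply, LinearMap.neg_apply,
        LinearMap.comp_apply, LinearMap.id_apply, LinearMap.fst_apply, LinearMap.snd_apply,
        LinearMap.inl_apply, LinearMap.inr_apply]
      rw [hFapp, h4, hcd' n]
      apply Prod.ext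
      · simp only [Prod.fst_sub, Prod.fst_add, Prod.snd_sub, Prod.snd_add, Prod.fst_neg]
        simp only [map_sub]
        abel
      · simp only [Prod.snd_sub, Prod.snd_add, Prod.snd_neg]
        simp only [neg_zero, add_zero, zero_add]
    rw [heq]
    exact ftp_add (ftp_add h1 h2) h3
  -- `C` is projective
  have hidC : FactorsThroughProjective R (LinearMap.id : C →ₗ[R] C) := by
    have key := ftp_comp_right ι (ftp_comp_left π hT)
    have hcomp : (LinearMap.id : C →ₗ[R] C) = (π ∘ₗ (LinearMap.id - F ∘ₗ r)) ∘ₗ ι := by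
      apply LinearMap.ext; intro x
      apply Subtype.ext
      have hx : r (x : N × P₀) = 0 := x.2
      have hy : (LinearMap.id - F ∘ₗ r : N × P₀ →ₗ[R] N × P₀) (ι x) = (x : N × P₀) := by
        simp only [LinearMap.sub_apply, LinearMap.id_apply, LinearMap.comp_apply, hι,
          Submodule.coe_subtype, hx, map_zero, sub_zero]
      rw [LinearMap.comp_apply, LinearMap.comp_apply, LinearMap.id_apply, hπcoe, hy, hx,
        map_zero, sub_zero]
    rw [hcomp]
    exact key
  obtain ⟨P', k1, k2, k3, a', b', hab''⟩ := hidC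
  have hCproj : Module.Projective R C := Module.Projective.of_split a' b' hab''
  -- the isomorphism
  set Φ : M × C →ₗ[R] N × P₀ := F ∘ₗ LinearMap.fst R M C + ι ∘ₗ LinearMap.snd R M C with hΦ
  set Ψ : N × P₀ →ₗ[R] M × C := LinearMap.prod r π with hΨ
  have hΦapp : ∀ x : M × C, Φ x = F x.1 + (x.2 : N × P₀) := fun x => by
    simp [hΦ, hι]
  have hΨapp : ∀ x : N × P₀, Ψ x = (r x, π x) := fun x => by
    simp [hΨ]
  have hΦΨ : Φ ∘ₗ Ψ = LinearMap.id := by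
    apply LinearMap.ext; intro x
    rw [LinearMap.comp_apply, hΨapp, hΦapp]
    simp only [LinearMap.id_apply]
    rw [hπcoe]
    abel
  have hΨΦ : Ψ ∘ₗ Φ = LinearMap.id := by
    apply LinearMap.ext
    rintro ⟨m, x⟩
    have hx : r (x : N × P₀) = 0 := x.2
    have h1 : r (F m + (x : N × P₀)) = m := by
      rw [map_add, hrF, hx, add_zero]
    have h2 : π (F m + (x : N × P₀)) = x := by
      apply Subtype.ext
      rw [hπcoe, h1]
      abel
    rw [LinearMap.comp_apply, hΦapp]
    simp only [LinearMap.id_apply]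
    rw [hΨapp, h1, h2]
  refine ⟨C, P₀, inferInstance, inferInstance, i1, i2, hCproj, i3,
    LinearEquiv.ofLinear Φ Ψ hΦΨ hΨΦ, ?_⟩
  apply LinearMap.ext; intro m
  show (Φ (m, 0)).1 = f m
  rw [hΦapp]
  simp only [ZeroMemClass.coe_zero, add_zero]
  rw [hFapp]
end

section
/- Let C be a finite category (finitely many objects and finitely many morphisms between any two objects) such that every non-identity morphism of C admits a unique factorization as a composite of irreducible morphisms, and suppose there is a function d : Ob(C) → ℕ with d(s) < d(t) for every non-identity morphism s → t. Let Q be the quiver whose vertices are the objects of C and whose arrows are the irreducible morphisms of C. Then the canonical functor from the free path category on Q to C (the identity on objects, sending each arrow to the corresponding irreducible morphism and each path to the composite of its arrows) is an isomorphism of categories. -/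
open CategoryTheory

/-- A morphism in a category is an identity (up to `eqToHom`). -/
def IsIdentityMor {C : Type} [Category.{0} C] {s t : C} (f : s ⟶ t) : Prop :=
  ∃ h : s = t, f = eqToHom h

/-- A morphism is irreducible if it is not an identity and in any factorization `f = g ≫ h`,
one of `g`, `h` is an identity. -/
def IsIrreducibleMor {C : Type} [Category.{0} C] {s t : C} (f : s ⟶ t) : Prop :=
  ¬ IsIdentityMor f ∧
    ∀ (m : C) (g : s ⟶ m) (h : m ⟶ t), f = g ≫ h → IsIdentityMor g ∨ IsIdentityMor h

/-- The vertices of the quiver of irreducible morphisms of a category: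
a copy of the objects. -/
structure IrrVertex (C : Type) [Category.{0} C] where
  obj : C

/-- The quiver whose vertices are the objects of `C` and whose arrows are the irreducible
morphisms of `C`. -/
instance irrQuiver (C : Type) [Category.{0} C] : Quiver.{0} (IrrVertex C) :=
  ⟨fun s t => { f : s.obj ⟶ t.obj // IsIrreducibleMor f }⟩

/-- The canonical functor from the free path category on the quiver of irreducible morphisms
to the category itself: the identity on objects, sending each arrow to the corresponding
irreducible morphism and each path to the composite of its arrows. -/
def irrCanonical (C : Type) [Category.{0} C] : Paths (IrrVertex C) ⥤ C :=
  Paths.lift { obj := fun x => x.obj, map := fun f => f.val }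

/-- Composite of a path of irreducible morphisms in `C`. -/
def composePath {C : Type} [Category.{0} C] {s : IrrVertex C} :
    ∀ {t : IrrVertex C}, Quiver.Path s t → (s.obj ⟶ t.obj)
  | _, Quiver.Path.nil => 𝟙 s.obj
  | _, Quiver.Path.cons p e => composePath p ≫ e.val

section Aux

variable {C : Type} [Category.{0} C]

lemma myComposePath_comp {a b c : IrrVertex C} (p : Quiver.Path a b) (q : Quiver.Path b c) :
    _root_.composePath (p.comp q) = _root_.composePath p ≫ _root_.composePath q := by
  induction q with
  | nil => simp [_root_.composePath]
  | cons q e ih =>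
    rw [Quiver.Path.comp_cons]
    show (_root_.composePath (p.comp q)) ≫ e.val = _
    rw [ih]
    show _ = _root_.composePath p ≫ (_root_.composePath q ≫ e.val)
    rw [Category.assoc]

lemma irrCanonical_map {a b : IrrVertex C} (p : Quiver.Path a b) :
    (irrCanonical C).map p = _root_.composePath p := by
  induction p with
  | nil => rfl
  | cons q e ih =>
    rw [show (irrCanonical C).map (q.cons e) = (irrCanonical C).map q ≫ e.val from rfl, ih]
    rfl

lemma d_le_of_path (d : C → ℕ)
    (hd : ∀ (s t : C) (f : s ⟶ t), ¬ IsIdentityMor f → d s < d t)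
    {a b : IrrVertex C} (p : Quiver.Path a b) : d a.obj ≤ d b.obj := by
  induction p with
  | nil => exact le_refl _
  | cons q e ih => exact le_of_lt (lt_of_le_of_lt ih (hd _ _ e.val e.property.1))

lemma not_identity_cons (d : C → ℕ)
    (hd : ∀ (s t : C) (f : s ⟶ t), ¬ IsIdentityMor f → d s < d t)
    {a m b : IrrVertex C} (p : Quiver.Path a m) (e : m ⟶ b) :
    ¬ IsIdentityMor (_root_.composePath (p.cons e)) := by
  rintro ⟨h, -⟩
  have h1 : d a.obj ≤ d m.obj := d_le_of_path d hd p
  have h2 : d m.obj < d b.obj := hd _ _ e.val e.property.1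
  rw [← h] at h2
  omega

lemma path_unique
    (hfree : ∀ (s t : C) (f : s ⟶ t), ¬ IsIdentityMor f →
      ∃! p : Quiver.Path (IrrVertex.mk s) (IrrVertex.mk t), _root_.composePath p = f)
    (d : C → ℕ)
    (hd : ∀ (s t : C) (f : s ⟶ t), ¬ IsIdentityMor f → d s < d t)
    {s t : C} (f : s ⟶ t)
    (p q : Quiver.Path (IrrVertex.mk s) (IrrVertex.mk t))
    (hp : _root_.composePath p = f) (hq : _root_.composePath q = f) : p = q := by
  by_cases hid : IsIdentityMor f
  · obtain ⟨hst, hf⟩ := hid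
    subst hst
    have hnil : ∀ r : Quiver.Path (IrrVertex.mk s) (IrrVertex.mk s),
        _root_.composePath r = f → r = Quiver.Path.nil := by
      intro r hr
      cases r with
      | nil => rfl
      | cons r' e =>
        exact absurd ⟨rfl, hr.trans hf⟩ (not_identity_cons d hd r' e)
    rw [hnil p hp, hnil q hq]
  · obtain ⟨r, -, hu⟩ := hfree s t f hid
    rw [hu p hp, hu q hq]

/-- The nil path transported along an equality of objects. -/
def idPath {s t : C} (h : s = t) : Quiver.Path (IrrVertex.mk s) (IrrVertex.mk t) :=
  h ▸ Quiver.Path.nil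

lemma composePath_idPath {s t : C} (h : s = t) :
    _root_.composePath (idPath (C := C) h) = eqToHom h := by
  subst h; rfl

open Classical in
noncomputable def pathOf
    (hfree : ∀ (s t : C) (f : s ⟶ t), ¬ IsIdentityMor f →
      ∃! p : Quiver.Path (IrrVertex.mk s) (IrrVertex.mk t), _root_.composePath p = f)
    {s t : C} (f : s ⟶ t) :
    Quiver.Path (IrrVertex.mk s) (IrrVertex.mk t) :=
  if h : IsIdentityMor f then idPath h.choose
  else (hfree s t f h).exists.choose

lemma composePath_pathOf
    (hfree : ∀ (s t : C) (f : s ⟶ t), ¬ IsIdentityMor f →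
      ∃! p : Quiver.Path (IrrVertex.mk s) (IrrVertex.mk t), _root_.composePath p = f)
    {s t : C} (f : s ⟶ t) :
    _root_.composePath (pathOf hfree f) = f := by
  unfold pathOf
  split_ifs with h
  · rw [composePath_idPath]
    exact h.choose_spec.symm
  · exact (hfree s t f h).exists.choose_spec

lemma pathOf_unique
    (hfree : ∀ (s t : C) (f : s ⟶ t), ¬ IsIdentityMor f →
      ∃! p : Quiver.Path (IrrVertex.mk s) (IrrVertex.mk t), _root_.composePath p = f)
    (d : C → ℕ)
    (hd : ∀ (s t : C) (f : s ⟶ t), ¬ IsIdentityMor f → d s < d t)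
    {a b : IrrVertex C} (f : a.obj ⟶ b.obj) (p : Quiver.Path a b)
    (hp : _root_.composePath p = f) : p = pathOf hfree f :=
  path_unique hfree d hd f p (pathOf hfree f) hp (composePath_pathOf hfree f)

noncomputable def invFunctor
    (hfree : ∀ (s t : C) (f : s ⟶ t), ¬ IsIdentityMor f →
      ∃! p : Quiver.Path (IrrVertex.mk s) (IrrVertex.mk t), _root_.composePath p = f)
    (d : C → ℕ)
    (hd : ∀ (s t : C) (f : s ⟶ t), ¬ IsIdentityMor f → d s < d t) :
    C ⥤ Paths (IrrVertex C) where
  obj x := IrrVertex.mk x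
  map f := pathOf hfree f
  map_id x := (pathOf_unique hfree d hd (𝟙 x) Quiver.Path.nil rfl).symm
  map_comp {x y z} f g := by
    refine (pathOf_unique hfree d hd (f ≫ g)
      ((pathOf hfree f).comp (pathOf hfree g)) ?_).symm
    rw [myComposePath_comp, composePath_pathOf, composePath_pathOf]

end Aux

/-- If `C` is a finite category in which every non-identity morphism admits a unique
factorization into irreducible morphisms, and `C` admits a degree function strictly increased
by every non-identity morphism, then the canonical functor from the free path category on the
quiver of irreducible morphisms of `C` to `C` is an isomorphism of categories. -/
theorem irrCanonical_isIso_of_free (C : Type) [Category.{0} C]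
    [Fintype C] [∀ s t : C, Fintype (s ⟶ t)]
    (hfree : ∀ (s t : C) (f : s ⟶ t), ¬ IsIdentityMor f →
      ∃! p : Quiver.Path (IrrVertex.mk s) (IrrVertex.mk t), composePath p = f)
    (d : C → ℕ)
    (hd : ∀ (s t : C) (f : s ⟶ t), ¬ IsIdentityMor f → d s < d t) :
    ∃ G : C ⥤ Paths (IrrVertex C),
      irrCanonical C ⋙ G = 𝟭 (Paths (IrrVertex C)) ∧ G ⋙ irrCanonical C = 𝟭 C := by
  refine ⟨invFunctor hfree d hd, ?_, ?_⟩
  · refine CategoryTheory.Functor.ext (fun a => rfl) (fun a b p => ?_)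
    simp only [Functor.comp_map, Functor.id_map, eqToHom_refl, Category.comp_id,
      Category.id_comp]
    change _ = 𝟙 _ ≫ p ≫ 𝟙 _
    rw [Category.id_comp, Category.comp_id]
    show pathOf hfree ((irrCanonical C).map p) = p
    exact (pathOf_unique hfree d hd ((irrCanonical C).map p) p (irrCanonical_map p).symm).symm
  · refine CategoryTheory.Functor.ext (fun x => rfl) (fun x y f => ?_)
    simp only [Functor.comp_map, Functor.id_map, eqToHom_refl, Category.comp_id,
      Category.id_comp]
    change _ = 𝟙 _ ≫ f ≫ 𝟙 _
    rw [Category.id_comp, Category.comp_id]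
    show (irrCanonical C).map (pathOf hfree f) = f
    rw [irrCanonical_map, composePath_pathOf]
end

section
/- Let R be a ring, let Q be a finite acyclic quiver, let F be a representation in Rep(Q,R), and fix a vertex j ∈ Q_0. Let D_j denote the category whose objects are the paths in Q of positive length ending at j and whose morphisms from a path p : i → j to a path q : i' → j are the paths r : i → i' with q ∘ r = p. Then the colimit over D_j of the functor sending a path p : i → j to F_i is isomorphic to the direct sum ⊕_{α ∈ Q_1, τ(α)=j} F_{σ(α)} taken over all arrows α with target j. -/
open CategoryTheory CategoryTheory.Limits

/-- The category of representations of a quiver `V` over a ring `R`: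
functors from the free path category on `V` to `R`-modules. -/
abbrev QuivRep (R : Type) [Ring R] (V : Type) [Quiver.{0} V] : Type _ :=
  Paths V ⥤ ModuleCat.{0} R

namespace QuivRep

variable {R : Type} [Ring R] {V : Type} [Quiver.{0} V]

/-- The `R`-module of a representation at a vertex `j`. -/
abbrev vtx (M : QuivRep R V) (j : V) : ModuleCat R := M.obj ((Paths.of V).obj j)

/-- The structure map of a representation along an arrow `a : i ⟶ j`. -/
abbrev arrowMap (M : QuivRep R V) {i j : V} (a : i ⟶ j) : M.vtx i ⟶ M.vtx j :=
  M.map ((Paths.of V).map a)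

/-- The component at a vertex `j` of a morphism of representations. -/
abbrev app {M N : QuivRep R V} (f : M ⟶ N) (j : V) : ↥(M.vtx j) →ₗ[R] ↥(N.vtx j) := (f.app ((Paths.of V).obj j)).hom

/-- A representation is monic if, at each vertex `j`, the natural map
`⊕_{a : i ⟶ j} M_i → M_j`, `(x_a) ↦ Σ_a m_a (x_a)`, is injective. -/
def IsMonic (M : QuivRep R V) : Prop :=
  ∀ j : V,
    letI : DecidableEq (Σ i : V, i ⟶ j) := Classical.decEq _
    Function.Injective
      (DirectSum.toModule R (Σ i : V, i ⟶ j) (M.vtx j)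
        (fun a => ((M.arrowMap a.2).hom : ↥(M.vtx a.1) →ₗ[R] ↥(M.vtx j))))

/-- A representation is RI-fibrant if, at each vertex `j`, the natural map
`M_j → ∏_{a : j ⟶ i} M_i`, `x ↦ (m_a x)_a`, is surjective. -/
def IsRIFibrant (M : QuivRep R V) : Prop :=
  ∀ j : V,
    Function.Surjective
      (LinearMap.pi
        (fun a : Σ i : V, (j ⟶ i) => ((M.arrowMap a.2).hom : ↥(M.vtx j) →ₗ[R] ↥(M.vtx a.1))))

end QuivRep

/-- A quiver is finite and acyclic: finitely many vertices and arrows, and the only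
paths from a vertex to itself are trivial. -/
def IsFiniteAcyclic (V : Type) [Quiver.{0} V] : Prop :=
  Nonempty (Fintype V) ∧ (∀ i j : V, Nonempty (Fintype (i ⟶ j))) ∧
    ∀ (i : V) (p : Quiver.Path i i), p.length = 0

/-- The category of paths of positive length ending at a fixed vertex `j`: an object is a path
`p : i → j` of positive length; a morphism from `p : i → j` to `q : i' → j` is a path
`r : i → i'` with `q ∘ r = p`. -/
structure PathTo (V : Type) [Quiver.{0} V] (j : V) where
  src : V
  path : Quiver.Path src j
  pos : 0 < path.length

instance (V : Type) [Quiver.{0} V] (j : V) : Category (PathTo V j) where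
  Hom p q := { r : Quiver.Path p.src q.src // r.comp q.path = p.path }
  id p := ⟨Quiver.Path.nil, Quiver.Path.nil_comp _⟩
  comp f g := ⟨f.val.comp g.val, by rw [Quiver.Path.comp_assoc, g.prop, f.prop]⟩
  id_comp f := by apply Subtype.ext; exact Quiver.Path.nil_comp _
  comp_id f := by apply Subtype.ext; exact Quiver.Path.comp_nil _
  assoc f g h := by apply Subtype.ext; exact Quiver.Path.comp_assoc _ _ _

/-- The diagram over the category of positive-length paths ending at `j` sending a path
`p : i → j` to `M_i` and a morphism `r` to `M(r)`. -/
noncomputable def pathToDiagram {R : Type} [Ring R] {V : Type} [Quiver.{0} V]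
    (M : QuivRep R V) (j : V) : PathTo V j ⥤ ModuleCat.{0} R where
  obj p := M.vtx p.src
  map {p q} r := M.map (r.val : ((Paths.of V).obj p.src : Paths V) ⟶ (Paths.of V).obj q.src)
  map_id p := M.map_id _
  map_comp f g := M.map_comp _ _

noncomputable section ColimitProof

namespace PathToColim

variable {R : Type} [Ring R] {V : Type} [Quiver.{0} V] (M : QuivRep R V) (j : V)

abbrev Idx (V : Type) [Quiver.{0} V] (j : V) : Type := Σ i : V, i ⟶ j

abbrev DS : ModuleCat.{0} R :=
  ModuleCat.of R (DirectSum (Idx V j) (fun a => ↥(M.vtx a.1)))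

def lofHom (a : Idx V j) : M.vtx a.1 ⟶ DS M j :=
  letI := Classical.decEq (Idx V j)
  ModuleCat.ofHom (DirectSum.lof R (Idx V j) (fun a => ↥(M.vtx a.1)) a : ↥(M.vtx a.1) →ₗ[R] ↥(DS M j))

def iotaAux : ∀ {i : V} (p : Quiver.Path i j), 0 < p.length → (M.vtx i ⟶ DS M j)
  | _, Quiver.Path.cons q a, _ =>
      (M.map (q : ((Paths.of V).obj _ : Paths V) ⟶ (Paths.of V).obj _)) ≫ lofHom M j ⟨_, a⟩
  | _, Quiver.Path.nil, h => absurd h (by simp)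

lemma iotaAux_congr {i : V} {p p' : Quiver.Path i j} (h : p = p') (hp : 0 < p.length)
    (hp' : 0 < p'.length) : iotaAux M j p hp = iotaAux M j p' hp' := by subst h; rfl

lemma iotaAux_cons {i b : V} (q : Quiver.Path i b) (a : b ⟶ j) (h : 0 < (q.cons a).length) :
    iotaAux M j (q.cons a) h =
      (M.map (q : ((Paths.of V).obj i : Paths V) ⟶ (Paths.of V).obj b)) ≫ lofHom M j ⟨b, a⟩ := rfl

lemma iotaAux_comp {i i' : V} (r : Quiver.Path i i') (p : Quiver.Path i' j)
    (h : 0 < p.length) (h' : 0 < (r.comp p).length) :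
    iotaAux M j (r.comp p) h' =
      (M.map (r : ((Paths.of V).obj i : Paths V) ⟶ (Paths.of V).obj i')) ≫ iotaAux M j p h := by
  cases p with
  | nil => simp at h
  | cons q a =>
    rw [iotaAux_congr M j (Quiver.Path.comp_cons r q a) h' (by simp), iotaAux_cons,
      iotaAux_cons]
    exact (congrArg (· ≫ lofHom M j ⟨_, a⟩) (M.map_comp (r : ((Paths.of V).obj i : Paths V) ⟶ (Paths.of V).obj i')
      (q : ((Paths.of V).obj i' : Paths V) ⟶ (Paths.of V).obj _))).trans (Category.assoc _ _ _)

def myCocone : Cocone (pathToDiagram M j) where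
  pt := DS M j
  ι :=
    { app := fun p => iotaAux M j p.path p.pos
      naturality := fun p q r => by
        have h1 : iotaAux M j p.path p.pos =
            (M.map (r.val : ((Paths.of V).obj p.src : Paths V) ⟶ (Paths.of V).obj q.src)) ≫
              iotaAux M j q.path q.pos := by
          have hp' : 0 < (r.val.comp q.path).length := by rw [r.prop]; exact p.pos
          rw [iotaAux_congr M j r.prop.symm p.pos hp']
          exact iotaAux_comp M j r.val q.path q.pos _
        exact h1.symm.trans (Category.comp_id _).symm }

/-- the path of length one given by an arrow, as an object of `PathTo V j`. -/
def obj1 (a : Idx V j) : PathTo V j := ⟨a.1, a.2.toPath, by simp [Quiver.Hom.toPath]⟩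

def myIsColimit : IsColimit (myCocone M j) := by
  letI := Classical.decEq (Idx V j)
  exact
  { desc := fun s =>
      ModuleCat.ofHom (DirectSum.toModule R (Idx V j) s.pt (fun a => (s.ι.app (obj1 j a)).hom))
    fac := fun s p => by
      obtain ⟨i, path, pos⟩ := p
      cases path with
      | nil => simp at pos
      | cons q a =>
        rename_i b
        show ((M.map (q : ((Paths.of V).obj _ : Paths V) ⟶ (Paths.of V).obj _)) ≫ lofHom M j ⟨_, a⟩) ≫ _
          = _
        refine (Category.assoc _ _ _).trans ?_
        have h2 : lofHom M j ⟨_, a⟩ ≫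
            ModuleCat.ofHom (DirectSum.toModule R (Idx V j) s.pt (fun a => (s.ι.app (obj1 j a)).hom)) =
            s.ι.app (obj1 j ⟨_, a⟩) := ModuleCat.hom_ext <| LinearMap.ext fun x => by
            show DirectSum.toModule R (Idx V j) s.pt (fun a => (s.ι.app (obj1 j a)).hom)
              (DirectSum.lof R (Idx V j) (fun b : Idx V j => ↥(M.vtx b.1)) (⟨_, a⟩ : Idx V j) x) = _
            exact DirectSum.toModule_lof (R := R) (ι := Idx V j)
              (M := fun b : Idx V j => ↥(M.vtx b.1)) (N := ↥s.pt)
              (φ := fun b => (s.ι.app (obj1 j b)).hom) (⟨b, a⟩ : Idx V j) x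
        refine (congrArg (M.map (q : ((Paths.of V).obj i : Paths V) ⟶ (Paths.of V).obj b) ≫ ·) h2).trans ?_
        exact s.w (⟨q, rfl⟩ : (⟨i, q.cons a, pos⟩ : PathTo V j) ⟶ obj1 j ⟨_, a⟩)
    uniq := fun s m hm => by
      refine ModuleCat.hom_ext (DirectSum.linearMap_ext R fun a => ?_)
      have h3 : iotaAux M j (obj1 j a).path (obj1 j a).pos ≫ m = s.ι.app (obj1 j a) :=
        hm (obj1 j a)
      have h4 : iotaAux M j (obj1 j a).path (obj1 j a).pos =
          (𝟙 (M.vtx a.1)) ≫ lofHom M j a := by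
        show (M.map (Quiver.Path.nil : ((Paths.of V).obj _ : Paths V) ⟶ (Paths.of V).obj _)) ≫ _ = _
        rw [show (Quiver.Path.nil : ((Paths.of V).obj a.1 : Paths V) ⟶ (Paths.of V).obj a.1) =
          𝟙 ((Paths.of V).obj a.1) from rfl, M.map_id]
      rw [h4, Category.id_comp] at h3
      refine LinearMap.ext fun x => ?_
      exact (LinearMap.congr_fun (congrArg ModuleCat.Hom.hom h3) x).trans
        (DirectSum.toModule_lof (R := R) (ι := Idx V j) (M := fun b : Idx V j => ↥(M.vtx b.1))
          (N := ↥s.pt) (φ := fun b => (s.ι.app (obj1 j b)).hom) a x).symm }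

end PathToColim

end ColimitProof

/-- For a finite acyclic quiver, the colimit (latching object) of the diagram of positive-length
paths ending at `j` is isomorphic to the direct sum `⊕_{a : i ⟶ j} M_i` over the arrows with
target `j`. -/
theorem colimit_pathToDiagram_iso_directSum
    (R : Type) [Ring R] {V : Type} [Quiver.{0} V] (hV : IsFiniteAcyclic V)
    (M : QuivRep R V) (j : V) :
    Nonempty (colimit (pathToDiagram M j) ≅
      ModuleCat.of R (DirectSum (Σ i : V, i ⟶ j) (fun a => ↥(M.vtx a.1)))) := by
  exact ⟨IsColimit.coconePointUniqueUpToIso (colimit.isColimit _) (PathToColim.myIsColimit M j)⟩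
end
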